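/- Fix a real α ∈ (0,1) and an integer p ≥ 3, and define H : ℂ → ℝ by H(0) = 0 and H(z) = |z|^{2/(1−α) − p} · Im(z^p) for z ≠ 0. Then for every natural number k with k < 2/(1−α) there exists a constant B > 0 such that for all z ∈ ℂ with 0 < |z| ≤ 1, the k-th total derivative of H at z satisfies ‖D^k H(z)‖ ≤ B·|z|^{2/(1−α) − k}. -/

import Mathlib

open Set


/-- Derivative bounds for the slowed-down Hamiltonian: for `α ∈ (0,1)`,
`p ≥ 3`, and `H(z) = |z|^{2/(1-α) - p} Im(z^p)` (with `H(0) = 0`),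
for every natural `k < 2/(1-α)` there is `B > 0` such that
`‖D^k H(z)‖ ≤ B |z|^{2/(1-α) - k}` for `0 < |z| ≤ 1`. -/
theorem hamiltonian_derivative_bound
    (α : ℝ) (hα : α ∈ Set.Ioo (0 : ℝ) 1)
    (p : ℤ) (hp : 3 ≤ p)
    (H : ℂ → ℝ)
    (hH0 : H 0 = 0)
    (hH : ∀ z : ℂ, z ≠ 0 →
      H z = ‖z‖ ^ (2 / (1 - α) - (p : ℝ)) * (z ^ p).im)
    (k : ℕ) (hk : (k : ℝ) < 2 / (1 - α)) :
    ∃ B > (0 : ℝ), ∀ z : ℂ, 0 < ‖z‖ → ‖z‖ ≤ 1 →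
      ‖iteratedFDeriv ℝ k H z‖ ≤ B * ‖z‖ ^ (2 / (1 - α) - (k : ℝ)) := by
  set γ : ℝ := 2 / (1 - α) with hγ
  set s : Set ℂ := ({0}ᶜ : Set ℂ) with hs_def
  have hs : IsOpen s := isOpen_compl_singleton
  have hsu : UniqueDiffOn ℝ s := hs.uniqueDiffOn
  have hptn : ((p.toNat : ℤ)) = p := Int.toNat_of_nonneg (by linarith)
  -- explicit formula on s
  have hHeq : ∀ z ∈ s, H z = ‖z‖ ^ (γ - (p : ℝ)) * (z ^ p.toNat).im := by
    intro z hz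
    have hz' : z ≠ 0 := hz
    rw [hH z hz']
    congr 2
    conv_lhs => rw [← hptn]
    rw [zpow_natCast]
  -- smoothness on s
  have hCD : ∀ m : ℕ, ContDiffOn ℝ m H s := by
    intro m z hz
    have hz' : z ≠ 0 := hz
    have h1 : ContDiffAt ℝ m (fun w : ℂ => ‖w‖ ^ (γ - (p:ℝ))) z :=
      (Real.contDiffAt_rpow_const_of_ne (norm_ne_zero_iff.mpr hz')).comp z
        (contDiffAt_norm ℂ hz')
    have h2 : ContDiff ℝ ⊤ (fun w : ℂ => (w ^ p.toNat).im) :=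
      Complex.imCLM.contDiff.comp
        ((contDiff_id.pow p.toNat : ContDiff ℂ ⊤ _).restrict_scalars ℝ)
    have hF : ContDiffAt ℝ m (fun w : ℂ => ‖w‖ ^ (γ - (p:ℝ)) * (w ^ p.toNat).im) z :=
      h1.mul (h2.of_le le_top).contDiffAt
    exact (hF.congr_of_eventuallyEq
      (Filter.eventuallyEq_of_mem (hs.mem_nhds hz) fun w hw => hHeq w hw)).contDiffWithinAt
  -- continuity of the k-th derivative on s
  have hcont : ContinuousOn (fun w => iteratedFDeriv ℝ k H w) s := by
    have h := (hCD (k + 1)).continuousOn_iteratedFDerivWithin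
      (m := k) (by exact_mod_cast Nat.le_succ k) hsu
    exact h.congr fun w hw => (iteratedFDerivWithin_of_isOpen k hs hw).symm
  -- bound on the unit sphere
  have hKs : Metric.sphere (0 : ℂ) 1 ⊆ s := by
    intro w hw
    have : ‖w‖ = 1 := mem_sphere_zero_iff_norm.mp hw
    simp only [hs_def, mem_compl_iff, mem_singleton_iff]
    intro h0; rw [h0] at this; simp at this
  obtain ⟨C, hC⟩ := (isCompact_sphere (0 : ℂ) 1).exists_bound_of_continuousOn
    (hcont.mono hKs)
  refine ⟨max C 1, lt_of_lt_of_le one_pos (le_max_right _ _), ?_⟩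
  intro z hz0 hz1
  set r : ℝ := ‖z‖ with hr_def
  have hr : 0 < r := hz0
  have hzne : z ≠ 0 := norm_pos_iff.mp hz0
  set w : ℂ := (r⁻¹ : ℝ) • z with hw_def
  have hwne : w ≠ 0 := by
    simp [hw_def, smul_eq_zero, hzne, inv_eq_zero, hr.ne']
  have hwabs : ‖w‖ = 1 := by
    rw [hw_def, norm_smul, Real.norm_eq_abs, abs_of_pos (inv_pos.mpr hr)]
    exact inv_mul_cancel₀ hr.ne'
  have hwK : w ∈ Metric.sphere (0 : ℂ) 1 :=
    mem_sphere_zero_iff_norm.mpr hwabs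
  have hwmem : w ∈ s := hKs hwK
  have hzmem : z ∈ s := hzne
  set g := (LinearEquiv.smulOfNeZero ℝ ℂ r hr.ne').toContinuousLinearEquiv with hg_def
  have hrw : r • w = z := by rw [hw_def, smul_inv_smul₀ hr.ne']
  -- composition identity
  have hcomp : iteratedFDerivWithin ℝ k (H ∘ g) s w
      = (iteratedFDerivWithin ℝ k H s (r • w)).compContinuousLinearMap
        (fun _ => (g : ℂ →L[ℝ] ℂ)) := by
    have hpre : (g : ℂ → ℂ) ⁻¹' s = s := by
      ext x
      show ¬ (r • x : ℂ) = 0 ↔ ¬ x = 0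
      simp [smul_eq_zero, hr.ne']
    have hmem : g w ∈ s := by
      show ¬ (r • w : ℂ) = 0
      simp [smul_eq_zero, hr.ne', hwne]
    have := g.iteratedFDerivWithin_comp_right H hsu (x := w) hmem k
    rw [hpre] at this
    exact this
  -- homogeneity : H ∘ g = r ^ γ • H
  have hhom : H ∘ g = (r ^ γ : ℝ) • H := by
    funext x
    show H (r • x) = r ^ γ • H x
    rcases eq_or_ne x 0 with rfl | hx
    · simp [hH0]
    · have hrx : (r • x : ℂ) ≠ 0 := by simp [smul_eq_zero, hr.ne', hx]
      rw [hH _ hrx, hH _ hx, smul_eq_mul]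
      have habs : ‖r • x‖ = r * ‖x‖ := by
        rw [norm_smul, Real.norm_eq_abs, abs_of_pos hr]
      have hpow : ((r • x) ^ p).im = r ^ p * (x ^ p).im := by
        rw [Complex.real_smul, mul_zpow, ← Complex.ofReal_zpow, Complex.im_ofReal_mul]
      rw [habs, hpow, Real.mul_rpow hr.le (norm_nonneg x)]
      have h1 : r ^ (γ - (p:ℝ)) * r ^ p = r ^ γ := by
        rw [← Real.rpow_intCast r p, ← Real.rpow_add hr]
        ring_nf
      rw [← h1]; ring
  -- const smul identity
  have hsmul : iteratedFDerivWithin ℝ k (H ∘ g) s w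
      = (r ^ γ : ℝ) • iteratedFDerivWithin ℝ k H s w := by
    rw [hhom]
    exact iteratedFDerivWithin_const_smul_apply (hCD k w hwmem) hsu hwmem
  -- compCLM = r ^ k • T
  have hclm : (iteratedFDerivWithin ℝ k H s (r • w)).compContinuousLinearMap
      (fun _ => (g : ℂ →L[ℝ] ℂ)) = (r ^ k : ℝ) • iteratedFDerivWithin ℝ k H s (r • w) := by
    ext m
    simp only [ContinuousMultilinearMap.compContinuousLinearMap_apply,
      ContinuousMultilinearMap.smul_apply]
    have hgm : ∀ i : Fin k, (g : ℂ →L[ℝ] ℂ) (m i) = r • m i := fun _ => rfl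
    simp_rw [hgm]
    rw [(iteratedFDerivWithin ℝ k H s (r • w)).map_smul_univ (fun _ : Fin k => r) m]
    simp [Finset.prod_const]
  have key : (r ^ γ : ℝ) • iteratedFDerivWithin ℝ k H s w
      = (r ^ k : ℝ) • iteratedFDerivWithin ℝ k H s z := by
    rw [← hsmul, hcomp, hclm, hrw]
  -- pass to norms
  have hnorm : r ^ γ * ‖iteratedFDeriv ℝ k H w‖ = r ^ k * ‖iteratedFDeriv ℝ k H z‖ := by
    have e1 := norm_smul ((r : ℝ) ^ γ) (iteratedFDerivWithin ℝ k H s w)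
    have e2 := norm_smul ((r : ℝ) ^ k) (iteratedFDerivWithin ℝ k H s z)
    rw [key, e2] at e1
    rw [Real.norm_eq_abs, Real.norm_eq_abs, abs_of_pos (Real.rpow_pos_of_pos hr γ),
      abs_of_pos (pow_pos hr k), iteratedFDerivWithin_of_isOpen k hs hwmem,
      iteratedFDerivWithin_of_isOpen k hs hzmem] at e1
    exact e1.symm
  have hDz : ‖iteratedFDeriv ℝ k H z‖ = r ^ (γ - (k:ℝ)) * ‖iteratedFDeriv ℝ k H w‖ := by
    have hsub : r ^ (γ - (k:ℝ)) = r ^ γ / r ^ ((k:ℕ):ℝ) := Real.rpow_sub hr γ k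
    have hrkne : r ^ ((k:ℕ):ℝ) ≠ 0 := (Real.rpow_pos_of_pos hr _).ne'
    rw [← Real.rpow_natCast r k] at hnorm
    rw [hsub, div_mul_eq_mul_div, eq_div_iff hrkne]
    linear_combination -hnorm
  rw [hDz, mul_comm (max C 1)]
  apply mul_le_mul_of_nonneg_left _ (Real.rpow_nonneg hr.le _)
  exact le_trans (hC w hwK) (le_max_left _ _)
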